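/- Let f : X → X be a pointwise periodic homeomorphism of a compact metric space, A ∈ 2^X, and let M be a minimal set of 2^f contained in ω_{2^f}(A). Then ω_{2^f}(A) is finite if and only if M is finite. -/
import Mathlib


open TopologicalSpace Metric Set Filter

/-- The induced map on the hyperspace of nonempty compact (= closed) subsets. -/
noncomputable def hyper {X : Type*} [MetricSpace X] (f : X ≃ₜ X) :
    NonemptyCompacts X → NonemptyCompacts X :=
  fun A => ⟨⟨f '' A, A.isCompact.image f.continuous⟩, A.nonempty.image f⟩

/-- `x` is uniformly recurrent for `g`. -/
def IsUnifRec {α : Type*} [MetricSpace α] (g : α → α) (x : α) : Prop :=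
  ∀ ε > (0:ℝ), ∃ N > 0, ∀ k : ℕ, dist (g^[k * N] x) x < ε

/-- `x` is recurrent for `g` (it belongs to its own ω-limit set). -/
def IsRec {α : Type*} [MetricSpace α] (g : α → α) (x : α) : Prop :=
  ∀ ε > (0:ℝ), ∀ m : ℕ, ∃ n ≥ m, 0 < n ∧ dist (g^[n] x) x < ε

/-- `x` is almost periodic for `g`. -/
def IsAP {α : Type*} [MetricSpace α] (g : α → α) (x : α) : Prop :=
  ∀ ε > (0:ℝ), ∃ N : ℕ, ∀ n : ℕ, ∃ i < N, dist (g^[n + i] x) x < ε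

/-- `(x, y)` is an asymptotic pair for `g`. -/
def Asymp {α : Type*} [MetricSpace α] (g : α → α) (x y : α) : Prop :=
  Filter.Tendsto (fun n => dist (g^[n] x) (g^[n] y)) Filter.atTop (nhds 0)

/-- `(x, y)` is a proximal pair for `g`. -/
def Proximal {α : Type*} [MetricSpace α] (g : α → α) (x y : α) : Prop :=
  ∀ ε > (0:ℝ), ∀ m : ℕ, ∃ n ≥ m, dist (g^[n] x) (g^[n] y) < ε

/-- The ω-limit set of `x` under `g`. -/
def omegaSet {α : Type*} [MetricSpace α] (g : α → α) (x : α) : Set α :=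
  {y | ∀ ε > (0:ℝ), ∀ m : ℕ, ∃ n ≥ m, dist (g^[n] x) y < ε}

/-- `M` is a minimal set of `g`. -/
def IsMinimalFor {α : Type*} [TopologicalSpace α] (g : α → α) (M : Set α) : Prop :=
  M.Nonempty ∧ IsClosed M ∧ Set.MapsTo g M M ∧
    ∀ M' ⊆ M, M'.Nonempty → IsClosed M' → Set.MapsTo g M' M' → M' = M

/-- `A` is internally chain transitive for `g`. -/
def ICT {α : Type*} [MetricSpace α] (g : α → α) (A : Set α) : Prop :=
  ∀ a ∈ A, ∀ b ∈ A, ∀ ε > (0:ℝ), ∃ N : ℕ, 1 ≤ N ∧ ∃ c : ℕ → α,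
    c 0 = a ∧ c N = b ∧ (∀ i ≤ N, c i ∈ A) ∧ ∀ i < N, dist (g (c i)) (c (i + 1)) < ε

set_option linter.unusedSectionVars false
section
variable {X : Type*} [MetricSpace X] [CompactSpace X] (f : X ≃ₜ X)

lemma hyper_coe (A : NonemptyCompacts X) : ((hyper f A : NonemptyCompacts X) : Set X) = f '' A := rfl

lemma hyper_iterate_coe (n : ℕ) (A : NonemptyCompacts X) :
    (((hyper f)^[n] A : NonemptyCompacts X) : Set X) = (⇑f)^[n] '' (A : Set X) := by
  induction n with
  | zero => simp
  | succ n ih =>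
    rw [Function.iterate_succ_apply', hyper_coe, ih, Function.iterate_succ', Set.image_comp]

lemma hedist_ne_top (A B : NonemptyCompacts X) :
    EMetric.hausdorffEdist (A : Set X) (B : Set X) ≠ ⊤ :=
  Metric.hausdorffEdist_ne_top_of_nonempty_of_bounded A.nonempty B.nonempty
    A.isCompact.isBounded B.isCompact.isBounded

lemma iterate_mul_fix {α : Type*} {h : α → α} {s : ℕ} {x : α} (hx : h^[s] x = x) (t : ℕ) :
    h^[s * t] x = x := by
  induction t with
  | zero => simp
  | succ t ih =>
    rw [Nat.mul_succ, Function.iterate_add_apply, hx, ih]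

lemma iterate_dvd_fix {α : Type*} {h : α → α} {s n : ℕ} {x : α} (hx : h^[s] x = x)
    (hd : s ∣ n) : h^[n] x = x := by
  obtain ⟨t, rfl⟩ := hd; exact iterate_mul_fix hx t

lemma mod_compl_dvd {d n r : ℕ} (hr : r < d) (hn : n % d = r) : d ∣ n + (d - r) := by
  obtain ⟨q, hq⟩ : ∃ q, n = d * q + r := ⟨n / d, by rw [← hn]; exact (Nat.div_add_mod n d).symm⟩
  exact ⟨q + 1, by rw [hq, Nat.mul_add, Nat.mul_one]; omega⟩

lemma key_mod (k : ℕ) {ε : ℝ} (hε : 0 < ε) :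
    ∃ δ > 0, ∀ S T : NonemptyCompacts X, dist S T < δ →
      dist ((hyper f)^[k] S) ((hyper f)^[k] T) < ε := by
  have hc : Continuous ((⇑f)^[k]) := f.continuous.iterate k
  have huc := CompactSpace.uniformContinuous_of_continuous hc
  rw [Metric.uniformContinuous_iff] at huc
  obtain ⟨δ, hδ, hδ'⟩ := huc (ε / 2) (by linarith)
  refine ⟨δ, hδ, fun S T hST => ?_⟩
  have hST' : hausdorffDist (S : Set X) (T : Set X) < δ := by
    rwa [Metric.NonemptyCompacts.dist_eq] at hST
  have key : hausdorffDist (((hyper f)^[k] S : NonemptyCompacts X) : Set X)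
      (((hyper f)^[k] T : NonemptyCompacts X) : Set X) ≤ ε / 2 := by
    rw [hyper_iterate_coe, hyper_iterate_coe]
    apply Metric.hausdorffDist_le_of_mem_dist (by linarith)
    · rintro x ⟨a, ha, rfl⟩
      obtain ⟨b, hb, hab⟩ := Metric.exists_dist_lt_of_hausdorffDist_lt ha hST' (hedist_ne_top S T)
      exact ⟨_, Set.mem_image_of_mem _ hb, (hδ' hab).le⟩
    · rintro x ⟨b, hb, rfl⟩
      obtain ⟨a, ha, hab⟩ := Metric.exists_dist_lt_of_hausdorffDist_lt' hb hST' (hedist_ne_top S T)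
      exact ⟨_, Set.mem_image_of_mem _ ha, by rw [dist_comm]; exact (hδ' hab).le⟩
  rw [Metric.NonemptyCompacts.dist_eq]
  linarith

end


lemma pigeon (d : ℕ) (hd : 0 < d) (T : ℝ → ℕ → Prop)
    (mono : ∀ {δ δ' : ℝ}, δ ≤ δ' → ∀ n, T δ n → T δ' n)
    (unb : ∀ δ > (0:ℝ), ∀ m, ∃ n ≥ m, T δ n) :
    ∃ r < d, ∀ δ > (0:ℝ), ∀ m, ∃ n ≥ m, T δ n ∧ n % d = r := by
  by_contra hcon
  push_neg at hcon
  have h' : ∀ r : ℕ, ∃ δ > (0:ℝ), ∃ m, ∀ n ≥ m, T δ n → n % d ≠ r := by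
    intro r
    by_cases hr : r < d
    · obtain ⟨δ, hδ, m, hm⟩ := hcon r hr
      exact ⟨δ, hδ, m, hm⟩
    · exact ⟨1, one_pos, 0, fun n _ _ hmod => hr (hmod ▸ Nat.mod_lt n hd)⟩
  choose δ hδ m hm using h'
  have hne : (Finset.range d).Nonempty := ⟨0, Finset.mem_range.mpr hd⟩
  set δ₀ : ℝ := (Finset.range d).inf' hne δ with hδ₀
  have hδ₀pos : 0 < δ₀ := by
    rw [hδ₀, Finset.lt_inf'_iff]
    exact fun i _ => hδ i
  set m₀ : ℕ := (Finset.range d).sup m with hm₀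
  obtain ⟨n, hn, hTn⟩ := unb δ₀ hδ₀pos m₀
  have hrd : n % d < d := Nat.mod_lt n hd
  have hmem : n % d ∈ Finset.range d := Finset.mem_range.mpr hrd
  have h1 : n ≥ m (n % d) := le_trans (Finset.le_sup hmem) hn
  have h2 : T (δ (n % d)) n := mono (Finset.inf'_le δ hmem) n hTn
  exact hm (n % d) n h1 h2 rfl

section
variable {X : Type*} [MetricSpace X] [CompactSpace X] (f : X ≃ₜ X)

/-- good-times hypothesis at modulus `d`. -/
def Hd (A B : NonemptyCompacts X) (d : ℕ) : Prop :=
  ∀ ε > (0:ℝ), ∀ m : ℕ, ∃ n ≥ m, d ∣ n ∧ dist ((hyper f)^[n] A) B < ε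

lemma upgrade1 {A B : NonemptyCompacts X} {p : ℕ} (hp : 0 < p)
    (hB : ∀ ε > (0:ℝ), ∀ m : ℕ, ∃ n ≥ m, dist ((hyper f)^[n] A) B < ε)
    (hper : (hyper f)^[p] B = B) :
    ∃ k, Hd f A ((hyper f)^[k] B) p ∧ (hyper f)^[p] ((hyper f)^[k] B) = (hyper f)^[k] B := by
  obtain ⟨r, hr, hgood⟩ := pigeon p hp (fun δ n => dist ((hyper f)^[n] A) B < δ)
    (fun hle n h => lt_of_lt_of_le h hle) hB
  refine ⟨p - r, ?_, ?_⟩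
  · intro ε hε m
    obtain ⟨δ, hδ, hmod⟩ := key_mod f (p - r) hε
    obtain ⟨n, hn, hTn, hnr⟩ := hgood δ hδ m
    refine ⟨n + (p - r), le_trans hn (Nat.le_add_right _ _), mod_compl_dvd hr hnr, ?_⟩
    rw [add_comm, Function.iterate_add_apply]
    exact hmod _ _ hTn
  · rw [← Function.iterate_add_apply, add_comm, Function.iterate_add_apply, hper]

lemma upgrade2 {A B : NonemptyCompacts X} {p c : ℕ} (hp : 0 < p) (hc : 0 < c)
    (hH : Hd f A B p) (hper : (hyper f)^[p] B = B) : Hd f A B (p * c) := by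
  have hpc : 0 < p * c := Nat.mul_pos hp hc
  obtain ⟨r, hr, hgood⟩ := pigeon (p * c) hpc
    (fun δ n => p ∣ n ∧ dist ((hyper f)^[n] A) B < δ)
    (fun hle n h => ⟨h.1, lt_of_lt_of_le h.2 hle⟩)
    (fun δ hδ m => by
      obtain ⟨n, hn, hdvd, hlt⟩ := hH δ hδ m
      exact ⟨n, hn, hdvd, hlt⟩)
  -- p ∣ r
  have hpr : p ∣ r := by
    obtain ⟨n, _, ⟨hpn, _⟩, hnr⟩ := hgood 1 one_pos 0
    rw [← hnr]
    exact (Nat.dvd_mod_iff (Dvd.intro c rfl)).mpr hpn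
  have hpk : p ∣ p * c - r := Nat.dvd_sub (Dvd.intro c rfl) hpr
  have hfix : (hyper f)^[p * c - r] B = B := iterate_dvd_fix hper hpk
  intro ε hε m
  obtain ⟨δ, hδ, hmod⟩ := key_mod f (p * c - r) hε
  obtain ⟨n, hn, ⟨hpn, hTn⟩, hnr⟩ := hgood δ hδ m
  refine ⟨n + (p * c - r), le_trans hn (Nat.le_add_right _ _), mod_compl_dvd hr hnr, ?_⟩
  rw [add_comm, Function.iterate_add_apply, ← hfix]
  exact hmod _ _ hTn

end

section
variable {X : Type*} [MetricSpace X] [CompactSpace X] (f : X ≃ₜ X)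

lemma A_sub_B {A B : NonemptyCompacts X} {p : ℕ} (hp : 0 < p)
    (hH : Hd f A B p) (hBper : (hyper f)^[p] B = B)
    (hper : ∀ x : X, ∃ n > 0, (⇑f)^[n] x = x) : (A : Set X) ⊆ (B : Set X) := by
  intro a ha
  obtain ⟨s, hs, hfix⟩ := hper a
  have hH2 := upgrade2 f hp hs hH hBper
  rw [← B.isCompact.isClosed.closure_eq]
  rw [Metric.mem_closure_iff]
  intro ε hε
  obtain ⟨n, _, hdvd, hlt⟩ := hH2 ε hε 0
  have hfa : (⇑f)^[n] a = a := iterate_dvd_fix hfix (dvd_trans (dvd_mul_left s p) hdvd)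
  have hmem : a ∈ (((hyper f)^[n] A : NonemptyCompacts X) : Set X) := by
    rw [hyper_iterate_coe]; exact ⟨a, ha, hfa⟩
  have hlt' : hausdorffDist (((hyper f)^[n] A : NonemptyCompacts X) : Set X) (B : Set X) < ε := by
    rwa [Metric.NonemptyCompacts.dist_eq] at hlt
  obtain ⟨b, hb, hab⟩ := Metric.exists_dist_lt_of_hausdorffDist_lt hmem hlt' (hedist_ne_top _ _)
  exact ⟨b, hb, hab⟩

lemma dense_locper (hper : ∀ x : X, ∃ n > 0, (⇑f)^[n] x = x) (B : NonemptyCompacts X)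
    {b₀ : X} (hb₀ : b₀ ∈ (B : Set X)) {ρ : ℝ} (hρ : 0 < ρ) :
    ∃ b₁ ∈ (B : Set X), dist b₀ b₁ < ρ ∧ ∃ m : ℕ, ∃ r : ℝ, 0 < m ∧ 0 < r ∧
      ∀ x ∈ (B : Set X), dist x b₁ < r → (⇑f)^[m] x = x := by
  haveI : CompactSpace (B : Set X) := isCompact_iff_compactSpace.mp B.isCompact
  set S : ℕ → Set (B : Set X) := fun m => {x | (⇑f)^[m+1] ↑x = ↑x} with hS
  have hcl : ∀ m, IsClosed (S m) := fun m =>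
    isClosed_eq ((f.continuous.iterate (m+1)).comp continuous_subtype_val) continuous_subtype_val
  have hcover : ⋃ m, S m = univ := by
    ext x
    simp only [mem_iUnion, mem_univ, iff_true, hS, mem_setOf_eq]
    obtain ⟨n, hn, hfix⟩ := hper ↑x
    exact ⟨n - 1, by rwa [Nat.sub_add_cancel hn]⟩
  have hdense := dense_iUnion_interior_of_closed hcl hcover
  rw [Metric.dense_iff] at hdense
  obtain ⟨y, hyball, hymem⟩ := hdense ⟨b₀, hb₀⟩ ρ hρ
  rw [mem_iUnion] at hymem
  obtain ⟨m, hym⟩ := hymem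
  rw [mem_interior_iff_mem_nhds, Metric.mem_nhds_iff] at hym
  obtain ⟨r, hr, hball⟩ := hym
  refine ⟨↑y, y.2, ?_, m + 1, r, Nat.succ_pos m, hr, ?_⟩
  · rw [mem_ball, Subtype.dist_eq] at hyball
    rw [dist_comm]
    exact hyball
  · intro x hx hxy
    have : (⟨x, hx⟩ : (B : Set X)) ∈ Metric.ball y r := by
      rw [mem_ball, Subtype.dist_eq]; exact hxy
    exact hball this

lemma B_sub_A {A B : NonemptyCompacts X} {p : ℕ} (hp : 0 < p)
    (hH : Hd f A B p) (hBper : (hyper f)^[p] B = B)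
    (hAB : (A : Set X) ⊆ (B : Set X))
    (hper : ∀ x : X, ∃ n > 0, (⇑f)^[n] x = x) : (B : Set X) ⊆ (A : Set X) := by
  intro b₀ hb₀
  rw [← A.isCompact.isClosed.closure_eq, Metric.mem_closure_iff]
  intro ε hε
  obtain ⟨b₁, hb₁, hbb, m, r, hm, hr, hloc⟩ := dense_locper f hper B hb₀ (by linarith : (0:ℝ) < ε/2)
  have hH2 := upgrade2 f hp hm hH hBper
  have hδ : (0:ℝ) < min (ε/2) r := lt_min (by linarith) hr
  obtain ⟨n, _, hdvd, hlt⟩ := hH2 _ hδ 0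
  have hlt' : hausdorffDist (((hyper f)^[n] A : NonemptyCompacts X) : Set X) (B : Set X)
      < min (ε/2) r := by rwa [Metric.NonemptyCompacts.dist_eq] at hlt
  obtain ⟨x, hxmem, hxb⟩ :=
    Metric.exists_dist_lt_of_hausdorffDist_lt' hb₁ hlt' (hedist_ne_top _ _)
  rw [hyper_iterate_coe] at hxmem
  obtain ⟨a, ha, rfl⟩ := hxmem
  have hpn : p ∣ n := dvd_trans (dvd_mul_right p m) hdvd
  have hBn : (⇑f)^[n] '' (B : Set X) = (B : Set X) := by
    have h1 : (hyper f)^[n] B = B := iterate_dvd_fix hBper hpn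
    rw [← hyper_iterate_coe, h1]
  have hxB : (⇑f)^[n] a ∈ (B : Set X) := hBn ▸ mem_image_of_mem _ (hAB ha)
  have hfixx : (⇑f)^[m] ((⇑f)^[n] a) = (⇑f)^[n] a :=
    hloc _ hxB (lt_of_lt_of_le hxb (min_le_right _ _))
  have hfixn : (⇑f)^[n] ((⇑f)^[n] a) = (⇑f)^[n] a :=
    iterate_dvd_fix hfixx (dvd_trans (dvd_mul_left m p) hdvd)
  have hax : a = (⇑f)^[n] a := (f.injective.iterate n) hfixn.symm
  refine ⟨a, ha, ?_⟩
  have h2 : dist a b₁ < min (ε/2) r := by rw [hax]; exact hxb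
  calc dist b₀ a ≤ dist b₀ b₁ + dist b₁ a := dist_triangle _ _ _
    _ < ε/2 + ε/2 := by
        rw [dist_comm b₁ a]
        have := lt_of_lt_of_le h2 (min_le_left _ _)
        exact add_lt_add hbb this
    _ = ε := by ring

end

theorem stmt16 {X : Type*} [MetricSpace X] [CompactSpace X]
    (f : X ≃ₜ X) (hper : ∀ x : X, ∃ n > 0, (⇑f)^[n] x = x)
    (A : NonemptyCompacts X) (M : Set (NonemptyCompacts X))
    (hM : IsMinimalFor (hyper f) M) (hsub : M ⊆ omegaSet (hyper f) A) :
    (omegaSet (hyper f) A).Finite ↔ M.Finite := by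
  constructor
  · intro h
    exact h.subset hsub
  · intro hMfin
    obtain ⟨B₀, hB₀⟩ := hM.1
    haveI := hMfin.to_subtype
    have hmaps : ∀ n, (hyper f)^[n] B₀ ∈ M := fun n => (hM.2.2.1.iterate n) hB₀
    obtain ⟨i, j, hij, hphi⟩ :=
      Finite.exists_ne_map_eq_of_infinite (fun n : ℕ => (⟨(hyper f)^[n] B₀, hmaps n⟩ : M))
    have hex : ∃ i j, i < j ∧ (hyper f)^[i] B₀ = (hyper f)^[j] B₀ := by
      rcases lt_or_gt_of_ne hij with h | h
      · exact ⟨i, j, h, congrArg Subtype.val hphi⟩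
      · exact ⟨j, i, h, (congrArg Subtype.val hphi).symm⟩
    obtain ⟨i, j, hij2, heq⟩ := hex
    have hp : 0 < j - i := Nat.sub_pos_of_lt hij2
    have hB₁per : (hyper f)^[j - i] ((hyper f)^[i] B₀) = (hyper f)^[i] B₀ := by
      rw [← Function.iterate_add_apply]
      have hpi : j - i + i = j := by omega
      rw [hpi, ← heq]
    have hω := hsub (hmaps i)
    have hω' : ∀ ε > (0:ℝ), ∀ m : ℕ, ∃ n ≥ m,
        dist ((hyper f)^[n] A) ((hyper f)^[i] B₀) < ε := hω
    obtain ⟨k, hHd, hB₂per⟩ := upgrade1 f hp hω' hB₁per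
    have hAB := A_sub_B f hp hHd hB₂per hper
    have hBA := B_sub_A f hp hHd hB₂per hAB hper
    have hAeq : A = (hyper f)^[k] ((hyper f)^[i] B₀) :=
      NonemptyCompacts.ext (subset_antisymm hAB hBA)
    have hAper : (hyper f)^[j - i] A = A := by
      rw [hAeq]; exact hB₂per
    have hSfin : ((fun i : ℕ => (hyper f)^[i] A) '' (Set.Iio (j - i))).Finite :=
      (Set.finite_Iio (j - i)).image _
    refine hSfin.subset ?_
    intro y hy
    rw [← hSfin.isClosed.closure_eq, Metric.mem_closure_iff]
    intro ε hε
    obtain ⟨n, _, hlt⟩ := hy ε hε 0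
    have hiter : (hyper f)^[n] A = (hyper f)^[n % (j - i)] A := by
      conv_lhs => rw [← Nat.mod_add_div n (j - i)]
      rw [Function.iterate_add_apply, iterate_mul_fix hAper]
    refine ⟨(hyper f)^[n % (j - i)] A, ⟨n % (j - i), Nat.mod_lt n hp, rfl⟩, ?_⟩
    rw [hiter] at hlt
    rw [dist_comm]
    exact hlt
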